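/- For every positive integer k there exists a finite group G with ι(G) = k. -/

import Mathlib

open Module

section helpers
variable {α β : Type*} [Lattice α] [Lattice β] [OrderTop α] [OrderTop β] [DecidableEq β]

lemma orderIso_finset_inf (e : α ≃o β) (s : Finset α) :
    (s.image e).inf id = e (s.inf id) := by
  rw [Finset.inf_image]
  exact (map_finset_inf (⟨⟨e, fun a b => e.map_inf a b⟩, e.map_top⟩ : InfTopHom α β) s id).symm
end helpers

lemma coatom_finrank {k : ℕ} (H : Submodule (ZMod 2) (Fin k → ZMod 2)) (h : IsCoatom H) :
    finrank (ZMod 2) H + 1 = k := by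
  have h1 : IsSimpleModule (ZMod 2) ((Fin k → ZMod 2) ⧸ H) := isSimpleModule_iff_isCoatom.mpr h
  have h2 : finrank (ZMod 2) ((Fin k → ZMod 2) ⧸ H) = 1 := isSimpleModule_iff_finrank_eq_one.mp h1
  have h3 := H.finrank_quotient_add_finrank
  rw [h2, finrank_fin_fun] at h3
  omega

lemma lower_bound {k : ℕ} (s : Finset (Submodule (ZMod 2) (Fin k → ZMod 2)))
    (hc : ∀ H ∈ s, IsCoatom H) :
    k ≤ finrank (ZMod 2) (s.inf id : Submodule (ZMod 2) (Fin k → ZMod 2)) + s.card := by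
  classical
  induction s using Finset.cons_induction with
  | empty =>
    show k ≤ finrank (ZMod 2) (⊤ : Submodule (ZMod 2) (Fin k → ZMod 2)) + 0
    simp [finrank_top, finrank_fin_fun]
  | cons a s ha ih =>
    have ih' := ih (fun H hH => hc H (Finset.mem_cons_of_mem hH))
    have hca : finrank (ZMod 2) a + 1 = k := coatom_finrank a (hc a (Finset.mem_cons_self a s))
    set t := s.inf id with ht
    have h4 := Submodule.finrank_sup_add_finrank_inf_eq a t
    have hsup : finrank (ZMod 2) ↥(a ⊔ t) ≤ k := by
      simpa [finrank_fin_fun] using Submodule.finrank_le (a ⊔ t)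
    rw [Finset.inf_cons, Finset.card_cons, ← ht]
    simp only [id_eq] at *
    omega

lemma proj_ker_inj {k : ℕ} : Function.Injective
    (fun i : Fin k => LinearMap.ker (LinearMap.proj (R := ZMod 2) (φ := fun _ : Fin k => ZMod 2) i)) := by
  intro i j hij
  by_contra hne
  simp only at hij
  have hji : ¬ j = i := fun h => hne h.symm
  have h1 : Pi.single i (1 : ZMod 2) ∈ LinearMap.ker (LinearMap.proj (R := ZMod 2) (φ := fun _ : Fin k => ZMod 2) j) := by
    simp [LinearMap.mem_ker, LinearMap.proj_apply, Pi.single_apply, hji]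
  rw [← hij] at h1
  simp [LinearMap.mem_ker, LinearMap.proj_apply, Pi.single_apply] at h1

/-- The intersection number of a group: the minimum number of maximal subgroups
whose intersection equals the Frattini subgroup. -/
noncomputable def interNum (G : Type*) [Group G] : ℕ :=
  sInf {n | ∃ s : Finset (Subgroup G), s.card = n ∧ (∀ M ∈ s, IsCoatom M) ∧
    s.inf id = frattini G}

theorem exists_group_with_interNum (k : ℕ) (hk : 1 ≤ k) :
    ∃ (G : Type) (inst : Group G), Finite G ∧ @interNum G inst = k := by
  classical
  set V := (Fin k → ZMod 2) with hV
  refine ⟨Multiplicative V, inferInstance, inferInstance, ?_⟩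
  set G := Multiplicative V
  set e : Subgroup G ≃o Submodule (ZMod 2) V :=
    AddSubgroup.toSubgroup.symm.trans (AddSubgroup.toZModSubmodule 2) with he
  set f : Fin k → Submodule (ZMod 2) V :=
    fun i => LinearMap.ker (LinearMap.proj (R := ZMod 2) (φ := fun _ : Fin k => ZMod 2) i) with hf
  have hfc : ∀ i, IsCoatom (f i) :=
    fun i => LinearMap.isCoatom_ker_of_surjective (Function.surjective_eval i)
  -- the submodule-side finset
  set T : Finset (Submodule (ZMod 2) V) := Finset.univ.image f with hT
  have hTinf : T.inf id = ⊥ := by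
    rw [eq_bot_iff]
    intro x hx
    rw [Finset.inf_image] at hx
    have hx' : ∀ i : Fin k, x ∈ f i := by
      intro i
      exact Submodule.mem_finsetInf.mp hx i (Finset.mem_univ i)
    have : x = 0 := by
      funext i
      exact LinearMap.mem_ker.mp (hx' i)
    simp [this]
  -- the subgroup-side finset
  set S : Finset (Subgroup G) := T.image e.symm with hS
  have hScard : S.card = k := by
    rw [hS, hT, Finset.card_image_of_injective _ e.symm.injective,
      Finset.card_image_of_injective _ proj_ker_inj, Finset.card_univ, Fintype.card_fin]
  have hScoatom : ∀ M ∈ S, IsCoatom M := by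
    intro M hM
    rw [hS, Finset.mem_image] at hM
    obtain ⟨H, hH, rfl⟩ := hM
    rw [hT, Finset.mem_image] at hH
    obtain ⟨i, _, rfl⟩ := hH
    exact (e.symm.isCoatom_iff _).mpr (hfc i)
  have hSinf : S.inf id = ⊥ := by
    rw [hS, orderIso_finset_inf e.symm, hTinf, map_bot]
  have hfrat : frattini G = ⊥ := by
    rw [eq_bot_iff, ← hSinf]
    exact Finset.le_inf fun M hM => frattini_le_coatom (hScoatom M hM)
  have hmem : k ∈ {n | ∃ s : Finset (Subgroup G), s.card = n ∧ (∀ M ∈ s, IsCoatom M) ∧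
      s.inf id = frattini G} := ⟨S, hScard, hScoatom, by rw [hSinf, hfrat]⟩
  refine le_antisymm (Nat.sInf_le hmem) (le_csInf ⟨k, hmem⟩ ?_)
  rintro n ⟨s, rfl, hsc, hsinf⟩
  have hsinf' : s.inf id = ⊥ := by rwa [hfrat] at hsinf
  have key := lower_bound (s.image e) (by
    intro H hH
    rw [Finset.mem_image] at hH
    obtain ⟨M, hM, rfl⟩ := hH
    exact (e.isCoatom_iff M).mpr (hsc M hM))
  rw [orderIso_finset_inf e s, hsinf', map_bot, finrank_bot,
    Finset.card_image_of_injective _ e.injective] at key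
  simpa using key
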